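/- Let I = (a,b) be bounded, γ measurable with 0 < c ≤ γ ≤ C a.e., p measurable with 1 < p⁻ ≤ p ≤ p⁺ < ∞ a.e. Set f = γ^{-1/(p-1)}, k = ∫_a^b f dx, and define K(m) implicitly by ∫_a^b f(x) K(m)^{1/(p(x)-1)} dx = m and Λ(m) = ∫_a^b f(x) K(m)^{p(x)/(p(x)-1)} dx. Then Λ is differentiable at m = k with Λ'(k) = (∫_I f(x) p(x)/(p(x)-1) dx) / (∫_I f(x)/(p(x)-1) dx), and consequently Λ'(k) > 1 and ∫_I f(x)/(p(x)-1) dx = (∫_I f dx)·(Λ'(k) - 1)^{-1}. -/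

import Mathlib

open MeasureTheory Set

/-- The DN map `Λ` is differentiable at the fixed point `k = ∫ f` with
`Λ'(k) = (∫ f·p/(p-1)) / (∫ f/(p-1))`; consequently `Λ'(k) > 1` and
`∫ f/(p-1) = (∫ f)·(Λ'(k) - 1)⁻¹`. -/
theorem DN_derivative_at_fixed_point
    (a b : ℝ) (hab : a < b) (γ p : ℝ → ℝ) (hγ : Measurable γ) (hp : Measurable p)
    (c C : ℝ) (hc : 0 < c)
    (hγbd : ∀ᵐ x ∂(volume.restrict (Ioo a b)), c ≤ γ x ∧ γ x ≤ C)
    (pm pp : ℝ) (hpm : 1 < pm)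
    (hpbd : ∀ᵐ x ∂(volume.restrict (Ioo a b)), pm ≤ p x ∧ p x ≤ pp)
    (K : ℝ → ℝ)
    (hK : ∀ m : ℝ, 0 < m → 0 < K m ∧
      ∫ x in Ioo a b, (γ x ^ (-(1 / (p x - 1)))) * K m ^ (1 / (p x - 1)) = m) :
    let f : ℝ → ℝ := fun x => γ x ^ (-(1 / (p x - 1)))
    let Λ : ℝ → ℝ := fun m => ∫ x in Ioo a b, f x * K m ^ (p x / (p x - 1))
    let k : ℝ := ∫ x in Ioo a b, f x
    let D : ℝ := (∫ x in Ioo a b, f x * (p x / (p x - 1))) /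
      (∫ x in Ioo a b, f x * (1 / (p x - 1)))
    HasDerivAt Λ D k ∧ 1 < D ∧
      (∫ x in Ioo a b, f x * (1 / (p x - 1)))
        = (∫ x in Ioo a b, f x) * (D - 1)⁻¹ := by
  intro f Λ k D
  set μ : Measure ℝ := volume.restrict (Ioo a b) with hμdef
  have hfdef : f = fun x => γ x ^ (-(1 / (p x - 1))) := rfl
  -- basic measure facts
  have hμuniv : μ univ = ENNReal.ofReal (b - a) := by
    simp [hμdef, Real.volume_Ioo]
  have hμuniv_pos : 0 < μ univ := by
    rw [hμuniv]; exact ENNReal.ofReal_pos.2 (by linarith)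
  have hμfin : μ univ < ⊤ := by rw [hμuniv]; exact ENNReal.ofReal_lt_top
  have hμne : μ ≠ 0 := by
    intro h; rw [h] at hμuniv_pos; simp at hμuniv_pos
  have hae_ne : (ae μ).NeBot := ae_neBot.2 hμne
  -- combined a.e. facts
  have hae : ∀ᵐ x ∂μ, (c ≤ γ x ∧ γ x ≤ C) ∧ pm ≤ p x ∧ p x ≤ pp := hγbd.and hpbd
  have hpp : 1 < pp := by
    obtain ⟨x, hx⟩ := hae.exists
    linarith [hx.2.1, hx.2.2]
  -- constants
  set Emax : ℝ := 1 / (pm - 1) with hEmaxdef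
  have hEmax_pos : 0 < Emax := by
    rw [hEmaxdef]; exact one_div_pos.2 (by linarith)
  set s : ℝ := min c 1 with hsdef
  have hs_pos : 0 < s := lt_min hc one_pos
  have hs_le_one : s ≤ 1 := min_le_right _ _
  set Mf : ℝ := s ^ (-Emax) with hMfdef
  have hMf_pos : 0 < Mf := Real.rpow_pos_of_pos hs_pos _
  -- pointwise a.e. facts
  have hpt : ∀ᵐ x ∂μ, 0 < f x ∧ f x ≤ Mf ∧ 0 < 1 / (p x - 1) ∧ 1 / (p x - 1) ≤ Emax
      ∧ p x - 1 ≠ 0 := by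
    refine hae.mono fun x hx => ?_
    obtain ⟨⟨hcx, hCx⟩, hpmx, hppx⟩ := hx
    have hγx : 0 < γ x := lt_of_lt_of_le hc hcx
    have hpx1 : 0 < p x - 1 := by linarith
    have hE_pos : 0 < 1 / (p x - 1) := by positivity
    have hE_le : 1 / (p x - 1) ≤ Emax := by
      rw [hEmaxdef]
      exact one_div_le_one_div_of_le (by linarith) (by linarith)
    refine ⟨Real.rpow_pos_of_pos hγx _, ?_, hE_pos, hE_le, ne_of_gt hpx1⟩
    have hsx : s ≤ γ x := le_trans (min_le_left _ _) hcx
    have h1 : s ^ (1 / (p x - 1)) ≤ γ x ^ (1 / (p x - 1)) :=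
      Real.rpow_le_rpow hs_pos.le hsx hE_pos.le
    have h2 : γ x ^ (-(1 / (p x - 1))) ≤ s ^ (-(1 / (p x - 1))) := by
      rw [Real.rpow_neg hγx.le, Real.rpow_neg hs_pos.le]
      exact inv_anti₀ (Real.rpow_pos_of_pos hs_pos _) h1
    have h3 : s ^ (-(1 / (p x - 1))) ≤ s ^ (-Emax) :=
      Real.rpow_le_rpow_of_exponent_ge hs_pos hs_le_one (by linarith)
    exact le_trans h2 h3
  -- measurability
  have hEmeas : Measurable fun x => 1 / (p x - 1) :=
    measurable_const.div (hp.sub measurable_const)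
  have hfmeas : Measurable f := hγ.pow hEmeas.neg
  have const_int : ∀ M : ℝ, Integrable (fun _ : ℝ => M) μ := by
    intro M
    exact integrableOn_const (by simpa [hμdef, Measure.restrict_apply_univ] using hμfin.ne) (by simp)
  have int_of_bd : ∀ (g : ℝ → ℝ) (M : ℝ), AEStronglyMeasurable g μ →
      (∀ᵐ x ∂μ, ‖g x‖ ≤ M) → Integrable g μ := by
    intro g M hm hb
    exact Integrable.mono' (const_int M) hm hb
  -- positivity of integrals
  have int_pos : ∀ g : ℝ → ℝ, Integrable g μ → (∀ᵐ x ∂μ, 0 < g x) → 0 < ∫ x, g x ∂μ := by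
    intro g hgi hgpos
    rw [integral_pos_iff_support_of_nonneg_ae (hgpos.mono fun x h => h.le) hgi]
    have h1 : μ {x | ¬ 0 < g x} = 0 := by
      simpa [ae_iff] using hgpos
    have h2 : μ (Function.support g)ᶜ = 0 := by
      refine measure_mono_null ?_ h1
      intro x hx
      simp only [mem_compl_iff, Function.mem_support, not_not] at hx
      simp [hx]
    rcases eq_or_ne (μ (Function.support g)) 0 with h0 | h0
    · exfalso
      have hle : μ univ ≤ μ (Function.support g) + μ (Function.support g)ᶜ := by
        rw [← Set.union_compl_self (Function.support g)]
        exact measure_union_le _ _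
      rw [h0, h2, add_zero] at hle
      exact (ne_of_gt hμuniv_pos) (le_antisymm hle zero_le)
    · exact pos_iff_ne_zero.2 h0
  -- integrability of f * t^E for t > 0
  have int_t : ∀ t : ℝ, 0 < t → Integrable (fun x => f x * t ^ (1 / (p x - 1))) μ := by
    intro t ht
    have hM1 : 1 ≤ max t t⁻¹ := by
      rcases le_total t 1 with h | h
      · exact le_trans ((one_le_inv₀ ht).2 h) (le_max_right _ _)
      · exact le_trans h (le_max_left _ _)
    refine int_of_bd _ (Mf * (max t t⁻¹) ^ Emax)
      ((hfmeas.mul (measurable_const.pow hEmeas)).aestronglyMeasurable) ?_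
    refine hpt.mono fun x hx => ?_
    obtain ⟨hf_pos, hf_le, hE_pos, hE_le, _⟩ := hx
    have htE : t ^ (1 / (p x - 1)) ≤ (max t t⁻¹) ^ Emax := by
      calc t ^ (1 / (p x - 1)) ≤ (max t t⁻¹) ^ (1 / (p x - 1)) :=
            Real.rpow_le_rpow ht.le (le_max_left _ _) hE_pos.le
        _ ≤ (max t t⁻¹) ^ Emax := Real.rpow_le_rpow_of_exponent_le hM1 hE_le
    rw [Real.norm_eq_abs, abs_of_nonneg (mul_nonneg hf_pos.le (Real.rpow_nonneg ht.le _))]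
    exact mul_le_mul hf_le htE (Real.rpow_nonneg ht.le _) hMf_pos.le
  have hf_int : Integrable f μ := by
    have := int_t 1 one_pos
    simpa [Real.one_rpow] using this
  have hfE_int : Integrable (fun x => f x * (1 / (p x - 1))) μ := by
    refine int_of_bd _ (Mf * Emax) ((hfmeas.mul hEmeas).aestronglyMeasurable) ?_
    refine hpt.mono fun x hx => ?_
    obtain ⟨hf_pos, hf_le, hE_pos, hE_le, _⟩ := hx
    rw [Real.norm_eq_abs, abs_of_nonneg (mul_nonneg hf_pos.le hE_pos.le)]
    exact mul_le_mul hf_le hE_le hE_pos.le hMf_pos.le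
  -- the function Fi
  set Fi : ℝ → ℝ := fun t => ∫ x, f x * t ^ (1 / (p x - 1)) ∂μ with hFidef
  have hFi1 : Fi 1 = k := by
    simp only [hFidef, Real.one_rpow, mul_one]
    rfl
  have Fi_lt : ∀ t u : ℝ, 0 < t → t < u → Fi t < Fi u := by
    intro t u ht htu
    have hu : 0 < u := lt_trans ht htu
    have hdiff : 0 < ∫ x, (f x * u ^ (1 / (p x - 1)) - f x * t ^ (1 / (p x - 1))) ∂μ := by
      refine int_pos _ ((int_t u hu).sub (int_t t ht)) ?_
      refine hpt.mono fun x hx => ?_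
      obtain ⟨hf_pos, _, hE_pos, _, _⟩ := hx
      have := Real.rpow_lt_rpow ht.le htu hE_pos
      have := mul_lt_mul_of_pos_left this hf_pos
      linarith
    rw [integral_sub (int_t u hu) (int_t t ht)] at hdiff
    simp only [hFidef]
    linarith
  have Fi_le : ∀ t u : ℝ, 0 < t → t ≤ u → Fi t ≤ Fi u := by
    intro t u ht htu
    rcases eq_or_lt_of_le htu with h | h
    · rw [h]
    · exact (Fi_lt t u ht h).le
  have Fi_pos : ∀ t : ℝ, 0 < t → 0 < Fi t := by
    intro t ht
    refine int_pos _ (int_t t ht) ?_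
    refine hpt.mono fun x hx => ?_
    exact mul_pos hx.1 (Real.rpow_pos_of_pos ht _)
  have hk_pos : 0 < k := by
    rw [← hFi1]; exact Fi_pos 1 one_pos
  have hFiK : ∀ m : ℝ, 0 < m → Fi (K m) = m := fun m hm => (hK m hm).2
  -- K k = 1
  have hKk : K k = 1 := by
    obtain ⟨hKkpos, -⟩ := hK k hk_pos
    by_contra h
    rcases lt_or_gt_of_ne h with h' | h'
    · have := Fi_lt (K k) 1 hKkpos h'
      rw [hFi1, hFiK k hk_pos] at this
      exact lt_irrefl _ this
    · have := Fi_lt 1 (K k) one_pos h'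
      rw [hFi1, hFiK k hk_pos] at this
      exact lt_irrefl _ this
  -- continuity of K at k
  have hKcont : ContinuousAt K k := by
    rw [Metric.continuousAt_iff]
    intro ε hε
    set ε' : ℝ := min ε (1/2) with hε'def
    have hε'_pos : 0 < ε' := lt_min hε (by norm_num)
    have hε'_le : ε' ≤ ε := min_le_left _ _
    have hε'_lt1 : ε' < 1 := lt_of_le_of_lt (min_le_right _ _) (by norm_num)
    have h1 : Fi (1 - ε') < k := by
      rw [← hFi1]; exact Fi_lt _ 1 (by linarith) (by linarith)
    have h2 : k < Fi (1 + ε') := by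
      rw [← hFi1]; exact Fi_lt 1 _ one_pos (by linarith)
    refine ⟨min (k - Fi (1 - ε')) (Fi (1 + ε') - k),
      lt_min (by linarith) (by linarith), ?_⟩
    intro m hm
    rw [Real.dist_eq] at hm
    have hm1 : Fi (1 - ε') < m := by
      have := abs_lt.1 (lt_of_lt_of_le hm (min_le_left _ _))
      linarith [this.1]
    have hm2 : m < Fi (1 + ε') := by
      have := abs_lt.1 (lt_of_lt_of_le hm (min_le_right _ _))
      linarith [this.2]
    have hm_pos : 0 < m := lt_trans (Fi_pos _ (by linarith)) hm1
    obtain ⟨hKm_pos, -⟩ := hK m hm_pos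
    have hub : K m < 1 + ε' := by
      by_contra h'
      push_neg at h'
      have := Fi_le (1 + ε') (K m) (by linarith) h'
      rw [hFiK m hm_pos] at this
      linarith
    have hlb : 1 - ε' < K m := by
      by_contra h'
      push_neg at h'
      have := Fi_le (K m) (1 - ε') hKm_pos h'
      rw [hFiK m hm_pos] at this
      linarith
    rw [Real.dist_eq, hKk, abs_lt]
    constructor <;> [linarith; linarith]
  -- derivative of Fi at 1
  set A : ℝ := ∫ x, f x * (1 / (p x - 1)) ∂μ with hAdef
  have hA_pos : 0 < A := by
    refine int_pos _ hfE_int ?_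
    exact hpt.mono fun x hx => mul_pos hx.1 hx.2.2.1
  have hA_ne : A ≠ 0 := ne_of_gt hA_pos
  have hFi_deriv : HasDerivAt Fi A 1 := by
    have key := hasDerivAt_integral_of_dominated_loc_of_deriv_le
      (F := fun t x => f x * t ^ (1 / (p x - 1)))
      (F' := fun t x => f x * ((1 / (p x - 1)) * t ^ (1 / (p x - 1) - 1)))
      (x₀ := (1:ℝ)) (μ := μ)
      (bound := fun _ => Mf * (Emax * (2:ℝ) ^ (Emax + 1)))
      (Metric.ball_mem_nhds (1:ℝ) (by norm_num : (0:ℝ) < 1/2))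
      (Filter.Eventually.of_forall fun t =>
        ((hfmeas.mul (measurable_const.pow hEmeas)).aestronglyMeasurable))
      (int_t 1 one_pos)
      ((hfmeas.mul (hEmeas.mul (measurable_const.pow
        (hEmeas.sub measurable_const)))).aestronglyMeasurable)
      ?_ (const_int _) ?_
    · obtain ⟨-, hd⟩ := key
      have : (∫ x, f x * ((1 / (p x - 1)) * (1:ℝ) ^ (1 / (p x - 1) - 1)) ∂μ) = A := by
        simp [Real.one_rpow, hAdef]
      rwa [this] at hd
    · refine hpt.mono fun x hx => ?_
      obtain ⟨hf_pos, hf_le, hE_pos, hE_le, _⟩ := hx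
      intro t ht
      rw [Metric.mem_ball, Real.dist_eq] at ht
      have ht1 : 1/2 < t := by
        have := abs_lt.1 ht; linarith [this.1]
      have ht2 : t < 3/2 := by
        have := abs_lt.1 ht; linarith [this.2]
      have ht_pos : 0 < t := by linarith
      have hrb : t ^ (1 / (p x - 1) - 1) ≤ (2:ℝ) ^ (Emax + 1) := by
        rcases le_total (1 / (p x - 1) - 1) 0 with hcase | hcase
        · have hinv : t⁻¹ ≤ 2 := by
            rw [inv_le_comm₀ (by linarith) (by norm_num)]
            linarith
          calc t ^ (1 / (p x - 1) - 1)
              = (t⁻¹) ^ (1 - 1 / (p x - 1)) := by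
                rw [Real.inv_rpow ht_pos.le, ← Real.rpow_neg ht_pos.le]
                congr 1
                ring
            _ ≤ (2:ℝ) ^ (1 - 1 / (p x - 1)) :=
                Real.rpow_le_rpow (by positivity) hinv (by linarith)
            _ ≤ (2:ℝ) ^ (Emax + 1) :=
                Real.rpow_le_rpow_of_exponent_le one_le_two (by linarith)
        · calc t ^ (1 / (p x - 1) - 1) ≤ (2:ℝ) ^ (1 / (p x - 1) - 1) :=
              Real.rpow_le_rpow ht_pos.le (by linarith) hcase
            _ ≤ (2:ℝ) ^ (Emax + 1) :=
              Real.rpow_le_rpow_of_exponent_le one_le_two (by linarith)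
      rw [Real.norm_eq_abs, abs_of_nonneg
        (mul_nonneg hf_pos.le (mul_nonneg hE_pos.le (Real.rpow_nonneg ht_pos.le _)))]
      refine mul_le_mul hf_le ?_ (mul_nonneg hE_pos.le (Real.rpow_nonneg ht_pos.le _)) hMf_pos.le
      refine mul_le_mul hE_le hrb (Real.rpow_nonneg ht_pos.le _) hEmax_pos.le
    · refine hpt.mono fun x hx => ?_
      intro t ht
      rw [Metric.mem_ball, Real.dist_eq] at ht
      have ht_pos : 0 < t := by
        have := abs_lt.1 ht; linarith [this.1]
      exact (Real.hasDerivAt_rpow_const (Or.inl ht_pos.ne')).const_mul (f x)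
  -- derivative of K at k
  have hKderiv : HasDerivAt K A⁻¹ k := by
    refine HasDerivAt.of_local_left_inverse (f := Fi) hKcont ?_ hA_ne ?_
    · rw [hKk]; exact hFi_deriv
    · have : ∀ᶠ m in nhds k, 0 < m := eventually_gt_nhds hk_pos
      exact this.mono fun m hm => hFiK m hm
  -- Λ m = m * K m near k
  have hΛ_eq : Λ =ᶠ[nhds k] fun m => m * K m := by
    have : ∀ᶠ m in nhds k, 0 < m := eventually_gt_nhds hk_pos
    refine this.mono fun m hm => ?_
    obtain ⟨hKm_pos, -⟩ := hK m hm
    have hptwise : ∀ᵐ x ∂μ, f x * K m ^ (p x / (p x - 1))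
        = K m * (f x * K m ^ (1 / (p x - 1))) := by
      refine hpt.mono fun x hx => ?_
      obtain ⟨-, -, -, -, hne⟩ := hx
      have hexp : p x / (p x - 1) = 1 + 1 / (p x - 1) := by
        field_simp
        ring
      rw [hexp, Real.rpow_add hKm_pos, Real.rpow_one]
      ring
    have h3 : Λ m = ∫ x, K m * (f x * K m ^ (1 / (p x - 1))) ∂μ := integral_congr_ae hptwise
    have h4 : (∫ x, f x * K m ^ (1 / (p x - 1)) ∂μ) = m := hFiK m hm
    rw [h3, integral_const_mul, h4]
    ring
  have hΛderiv : HasDerivAt Λ (1 * K k + k * A⁻¹) k :=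
    HasDerivAt.congr_of_eventuallyEq ((hasDerivAt_id k).mul hKderiv) hΛ_eq
  -- compute D
  have hB : (∫ x, f x * (p x / (p x - 1)) ∂μ) = k + A := by
    have hptwise : ∀ᵐ x ∂μ, f x * (p x / (p x - 1)) = f x + f x * (1 / (p x - 1)) := by
      refine hpt.mono fun x hx => ?_
      obtain ⟨-, -, -, -, hne⟩ := hx
      have hexp : p x / (p x - 1) = 1 + 1 / (p x - 1) := by field_simp; ring
      rw [hexp]; ring
    rw [integral_congr_ae hptwise, integral_add hf_int hfE_int]
  have hD : D = 1 + k * A⁻¹ := by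
    show (∫ x, f x * (p x / (p x - 1)) ∂μ) / A = 1 + k * A⁻¹
    rw [hB, add_div, div_self hA_ne, div_eq_mul_inv, add_comm]
  have hD1 : 1 < D := by
    rw [hD]
    have : 0 < k * A⁻¹ := mul_pos hk_pos (inv_pos.2 hA_pos)
    linarith
  refine ⟨?_, hD1, ?_⟩
  · have : (1 : ℝ) * K k + k * A⁻¹ = D := by rw [hKk, hD]; ring
    rwa [this] at hΛderiv
  · show A = k * (D - 1)⁻¹
    rw [hD, add_sub_cancel_left, mul_inv_rev, inv_inv, ← mul_assoc,
      mul_comm k A, mul_assoc, mul_inv_cancel₀ (ne_of_gt hk_pos), mul_one]
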